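/- arXiv:2404.00410 — 2 statements merged into one kernel-verified Lean document; each statement's English description precedes it below -/
import Mathlib

section
/- Let n ≥ 21 be odd and let m be an even integer with (n+7)/2 ≤ m ≤ n−7. Then the sequence consisting of m/2, then (n+3−m)/2, then 5, then the number 2 repeated (n−3−m)/2 times, then the number 1 repeated m − (n+7)/2 times, is a partition of n and its value λ equals m. -/
/-- `λ(p) = (1/2)·Σ_{j=1}^k n_j·(n_j − 2j + 1)` for a finite sequence of naturals. -/
def transLam (L : List ℕ) : ℚ :=
  (∑ j ∈ Finset.range L.length,
    (L.getD j 0 : ℚ) * ((L.getD j 0 : ℚ) - 2 * ((j : ℚ) + 1) + 1)) / 2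

/-- A partition of `n`: a nonincreasing list of positive integers summing to `n`. -/
def IsPartitionOf (n : ℕ) (L : List ℕ) : Prop :=
  L.Pairwise (· ≥ ·) ∧ (∀ x ∈ L, 0 < x) ∧ L.sum = n

lemma transLam_append_singleton (L : List ℕ) (x : ℕ) :
    transLam (L ++ [x]) = transLam L + (x * ((x:ℚ) - 2 * (L.length + 1) + 1)) / 2 := by
  simp only [transLam, List.length_append, List.length_singleton]
  rw [Finset.sum_range_succ, ← add_div]
  have h1 : ∀ j ∈ Finset.range L.length,
      ((L ++ [x]).getD j 0 : ℚ) * (((L ++ [x]).getD j 0 : ℚ) - 2 * ((j:ℚ) + 1) + 1)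
      = (L.getD j 0 : ℚ) * ((L.getD j 0 : ℚ) - 2 * ((j:ℚ) + 1) + 1) := by
    intro j hj
    simp only [Finset.mem_range] at hj
    rw [List.getD_append _ _ _ _ hj]
  rw [Finset.sum_congr rfl h1, List.getD_append_right _ _ _ _ (le_refl _)]
  simp

lemma transLam_append_replicate (L : List ℕ) (x k : ℕ) :
    transLam (L ++ List.replicate k x)
      = transLam L + ((k:ℚ) * x * ((x:ℚ) - 2 * L.length - k)) / 2 := by
  induction k with
  | zero => simp
  | succ k ih =>
    rw [List.replicate_succ', ← List.append_assoc, transLam_append_singleton, ih]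
    simp only [List.length_append, List.length_replicate]
    push_cast
    ring

lemma pairwise_replicate' {R : ℕ → ℕ → Prop} {x : ℕ} (h : R x x) (k : ℕ) :
    (List.replicate k x).Pairwise R := by
  induction k with
  | zero => simp
  | succ k ih =>
    rw [List.replicate_succ]
    refine List.Pairwise.cons (fun y hy => ?_) ih
    rw [List.eq_of_mem_replicate hy]
    exact h

theorem case_odd_n_even_lambda (n m : ℕ) (hn : 21 ≤ n) (hnodd : Odd n) (hmeven : Even m)
    (h1 : n + 7 ≤ 2 * m) (h2 : m ≤ n - 7) :
    IsPartitionOf n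
      ([m / 2, (n + 3 - m) / 2, 5] ++ List.replicate ((n - 3 - m) / 2) 2
        ++ List.replicate (m - (n + 7) / 2) 1) ∧
    transLam
      ([m / 2, (n + 3 - m) / 2, 5] ++ List.replicate ((n - 3 - m) / 2) 2
        ++ List.replicate (m - (n + 7) / 2) 1) = (m : ℚ) := by
  obtain ⟨a, ha⟩ := hmeven
  obtain ⟨b, hb⟩ := hnodd
  obtain ⟨d, c, hn', hm'⟩ : ∃ d c, n = 4*d + 2*c + 21 ∧ m = 2*d + 2*c + 14 :=
    ⟨(n - m - 7) / 2, (2*m - n - 7) / 2, by omega, by omega⟩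
  have e1 : m / 2 = d + c + 7 := by omega
  have e2 : (n + 3 - m) / 2 = d + 5 := by omega
  have e3 : (n - 3 - m) / 2 = d + 2 := by omega
  have e4 : m - (n + 7) / 2 = c := by omega
  rw [e1, e2, e3, e4]
  refine ⟨⟨?_, ?_, ?_⟩, ?_⟩
  · -- sorted
    rw [List.append_assoc, List.pairwise_append]
    refine ⟨?_, List.pairwise_append.mpr
        ⟨pairwise_replicate' (R := (· ≥ ·)) (le_refl 2) _,
         pairwise_replicate' (R := (· ≥ ·)) (le_refl 1) _, ?_⟩, ?_⟩
    · simp only [List.pairwise_cons, List.mem_cons, List.mem_singleton,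
        List.not_mem_nil, List.Pairwise.nil]
      refine ⟨fun y hy => ?_, fun y hy => ?_, by simp, trivial⟩
      · simp at hy; rcases hy with h | h <;> omega
      · simp at hy; omega
    · intro x hx y hy
      rw [List.eq_of_mem_replicate hx, List.eq_of_mem_replicate hy]
      omega
    · intro x hx y hy
      simp only [List.mem_cons, List.mem_singleton, List.not_mem_nil, or_false] at hx
      rcases List.mem_append.mp hy with h | h <;>
        rw [List.eq_of_mem_replicate h] <;> rcases hx with h' | h' | h' <;> omega
  · -- positivity
    intro x hx
    simp only [List.mem_append, List.mem_cons, List.mem_singleton, List.mem_replicate,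
      List.not_mem_nil, or_false] at hx
    omega
  · -- sum
    simp [List.sum_append, List.sum_replicate]
    omega
  · -- lambda
    rw [List.append_assoc, ← List.append_assoc, transLam_append_replicate,
      transLam_append_replicate]
    have h3 : transLam [d + c + 7, d + 5, 5] =
        (((d:ℚ) + c + 7) * ((d:ℚ) + c + 7 - 1) + ((d:ℚ) + 5) * ((d:ℚ) + 5 - 3)) / 2 := by
      simp [transLam, Finset.sum_range_succ]
      ring
    rw [h3, hm']
    simp only [List.length_append, List.length_replicate, List.length_cons, List.length_nil]
    push_cast
    ring
end

section
/- Let n and n₁ be positive integers with n − n₁ ≥ 31 and 3n₁ ≥ n + 3. Then for every integer m with C(n₁, 2) − 2(n − n₁) ≤ m ≤ C(n₁, 2), where C(n₁, 2) = n₁(n₁ − 1)/2, there exists a partition p of n whose largest part equals n₁ such that λ(p) = m. -/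
lemma sum_getD (L : List ℕ) :
    ∑ j ∈ Finset.range L.length, (L.getD j 0 : ℚ) = (L.sum : ℚ) := by
  induction L with
  | nil => simp
  | cons a L ih =>
    rw [List.length_cons, Finset.sum_range_succ']
    simp only [List.getD_cons_succ, List.getD_cons_zero, ih, List.sum_cons]
    push_cast; ring

lemma transLam_cons (x : ℕ) (L : List ℕ) :
    transLam (x :: L) = (x : ℚ) * ((x : ℚ) - 1) / 2 + transLam L - L.sum := by
  have key : ∀ j ∈ Finset.range L.length,
      ((x :: L).getD (j+1) 0 : ℚ) * (((x :: L).getD (j+1) 0 : ℚ) - 2 * (((j:ℚ)+1) + 1) + 1)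
      = (L.getD j 0 : ℚ) * ((L.getD j 0 : ℚ) - 2 * ((j : ℚ) + 1) + 1) - 2 * (L.getD j 0 : ℚ) := by
    intro j _
    simp only [List.getD_cons_succ]
    ring
  unfold transLam
  rw [List.length_cons, Finset.sum_range_succ']
  rw [Finset.sum_congr rfl (by intro j hj; push_cast; exact key j hj)]
  rw [Finset.sum_sub_distrib, ← Finset.mul_sum, sum_getD]
  simp only [List.getD_cons_zero]
  push_cast
  ring



lemma transLam_nil : transLam [] = 0 := by simp [transLam]

lemma sum_rep1 (y : ℕ) : (List.replicate y 1).sum = y := by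
  simp

lemma transLam_rep1 (y : ℕ) :
    transLam (List.replicate y 1) = -((y:ℚ) * ((y:ℚ) - 1) / 2) := by
  induction y with
  | zero => simp [transLam]
  | succ y ih =>
    rw [List.replicate_succ, transLam_cons, ih, sum_rep1]
    push_cast; ring

lemma sum_rep21 (x y : ℕ) :
    (List.replicate x 2 ++ List.replicate y 1).sum = 2*x + y := by
  simp [List.sum_append]; omega

lemma transLam_rep21 (x y : ℕ) :
    transLam (List.replicate x 2 ++ List.replicate y 1)
      = 2*(x:ℚ) - (x:ℚ)^2 - (x:ℚ)*(y:ℚ) - (y:ℚ)*((y:ℚ)-1)/2 := by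
  induction x with
  | zero => rw [List.replicate_zero, List.nil_append, transLam_rep1]; push_cast; ring
  | succ x ih =>
    rw [List.replicate_succ, List.cons_append, transLam_cons, ih, sum_rep21]
    push_cast; ring

lemma sum_rep321 (z x y : ℕ) :
    (List.replicate z 3 ++ (List.replicate x 2 ++ List.replicate y 1)).sum = 3*z + 2*x + y := by
  simp [List.sum_append]; omega

lemma transLam_rep321 (z x y : ℕ) :
    transLam (List.replicate z 3 ++ (List.replicate x 2 ++ List.replicate y 1))
      = 3*(z:ℚ) - 3*(z:ℚ)*((z:ℚ)-1)/2 - (z:ℚ)*(2*(x:ℚ)+(y:ℚ))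
        + (2*(x:ℚ) - (x:ℚ)^2 - (x:ℚ)*(y:ℚ) - (y:ℚ)*((y:ℚ)-1)/2) := by
  induction z with
  | zero => rw [List.replicate_zero, List.nil_append, transLam_rep21]; push_cast; ring
  | succ z ih =>
    rw [List.replicate_succ, List.cons_append, transLam_cons, ih, sum_rep321]
    push_cast; ring

-- sortedness of blocks
lemma sorted_rep_append (z k : ℕ) (L : List ℕ) (hL : L.Pairwise (· ≥ ·))
    (h : ∀ a ∈ L, a ≤ k) : (List.replicate z k ++ L).Pairwise (· ≥ ·) := by
  induction z with
  | zero => simpa using hL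
  | succ z ih =>
    rw [List.replicate_succ, List.cons_append]
    refine List.pairwise_cons.mpr ⟨?_, ih⟩
    intro b hb
    rcases List.mem_append.mp hb with hb | hb
    · rw [List.eq_of_mem_replicate hb]
    · exact h b hb

lemma sorted_rep321 (z x y : ℕ) :
    (List.replicate z 3 ++ (List.replicate x 2 ++ List.replicate y 1)).Pairwise (· ≥ ·) := by
  have h1 : (List.replicate y 1).Pairwise (· ≥ ·) := by
    have : ([] : List ℕ).Pairwise (· ≥ ·) := List.Pairwise.nil
    simpa using sorted_rep_append y 1 [] this (by simp)
  have h2 : (List.replicate x 2 ++ List.replicate y 1).Pairwise (· ≥ ·) := by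
    refine sorted_rep_append _ _ _ h1 ?_
    intro a ha; rw [List.eq_of_mem_replicate ha]; omega
  refine sorted_rep_append _ _ _ h2 ?_
  intro a ha
  rcases List.mem_append.mp ha with h | h <;> rw [List.eq_of_mem_replicate h] <;> omega

lemma hook3 (n n₁ : ℕ) (m : ℤ) (a1 b1 a2 b2 a3 b3 : ℕ)
    (hn₁ : 0 < n₁)
    (ha12 : a2 < a1) (ha23 : a3 < a2) (hb12 : b2 < b1) (hb23 : b3 < b2)
    (hbnd : a1 + 1 ≤ n₁)
    (hsum : n₁ + a1 + b1 + a2 + b2 + a3 + b3 + 3 = n)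
    (hval : 2*m = (n₁:ℤ)*((n₁:ℤ)-1) + ((a1:ℤ) - b1)*((a1:ℤ) + b1 + 1)
        + ((a2:ℤ) - b2)*((a2:ℤ) + b2 + 1) + ((a3:ℤ) - b3)*((a3:ℤ) + b3 + 1)
        - 2*((n:ℤ) - n₁)) :
    ∃ L : List ℕ, IsPartitionOf n L ∧ n₁ ∈ L ∧ (∀ x ∈ L, x ≤ n₁) ∧
      transLam L = (m : ℚ) := by
  obtain ⟨x, hx⟩ : ∃ x, b2 = b3 + 1 + x := ⟨b2 - b3 - 1, by omega⟩
  obtain ⟨y, hy⟩ : ∃ y, b1 = b2 + 1 + y := ⟨b1 - b2 - 1, by omega⟩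
  subst hx hy hsum
  refine ⟨n₁ :: (a1+1) :: (a2+2) :: (a3+3) ::
    (List.replicate b3 3 ++ (List.replicate x 2 ++ List.replicate y 1)), ⟨?_, ?_, ?_⟩, ?_, ?_, ?_⟩
  · -- sorted
    refine List.pairwise_cons.mpr ⟨?_, List.pairwise_cons.mpr ⟨?_, List.pairwise_cons.mpr ⟨?_,
      List.pairwise_cons.mpr ⟨?_, sorted_rep321 b3 x y⟩⟩⟩⟩ <;>
    · intro b hb
      simp only [List.mem_cons, List.mem_append, List.mem_replicate] at hb
      omega
  · -- positive
    intro v hv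
    simp only [List.mem_cons, List.mem_append, List.mem_replicate] at hv
    omega
  · -- sum
    simp only [List.sum_cons, sum_rep321]
    omega
  · exact List.mem_cons_self
  · intro v hv
    simp only [List.mem_cons, List.mem_append, List.mem_replicate] at hv
    omega
  · -- value
    rw [transLam_cons, transLam_cons, transLam_cons, transLam_cons, transLam_rep321]
    simp only [List.sum_cons, sum_rep321]
    have hq := congrArg (fun t : ℤ => (t : ℚ)) hval
    push_cast at hq ⊢
    linear_combination (-1/2 : ℚ) * hq

lemma blocks21 (x y : ℕ) :
    List.replicate 0 3 ++ (List.replicate x 2 ++ List.replicate y 1)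
      = List.replicate x 2 ++ List.replicate y 1 := by
  simp

lemma hook2 (n n₁ : ℕ) (m : ℤ) (a1 b1 a2 b2 : ℕ)
    (hn₁ : 0 < n₁)
    (ha12 : a2 < a1) (hb12 : b2 < b1)
    (hbnd : a1 + 1 ≤ n₁)
    (hsum : n₁ + a1 + b1 + a2 + b2 + 2 = n)
    (hval : 2*m = (n₁:ℤ)*((n₁:ℤ)-1) + ((a1:ℤ) - b1)*((a1:ℤ) + b1 + 1)
        + ((a2:ℤ) - b2)*((a2:ℤ) + b2 + 1) - 2*((n:ℤ) - n₁)) :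
    ∃ L : List ℕ, IsPartitionOf n L ∧ n₁ ∈ L ∧ (∀ x ∈ L, x ≤ n₁) ∧
      transLam L = (m : ℚ) := by
  obtain ⟨y, hy⟩ : ∃ y, b1 = b2 + 1 + y := ⟨b1 - b2 - 1, by omega⟩
  subst hy hsum
  refine ⟨n₁ :: (a1+1) :: (a2+2) ::
    (List.replicate b2 2 ++ List.replicate y 1), ⟨?_, ?_, ?_⟩, ?_, ?_, ?_⟩
  · refine List.pairwise_cons.mpr ⟨?_, List.pairwise_cons.mpr ⟨?_, List.pairwise_cons.mpr ⟨?_,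
      by rw [← blocks21]; exact sorted_rep321 0 b2 y⟩⟩⟩ <;>
    · intro b hb
      simp only [List.mem_cons, List.mem_append, List.mem_replicate] at hb
      omega
  · intro v hv
    simp only [List.mem_cons, List.mem_append, List.mem_replicate] at hv
    omega
  · have := sum_rep321 0 b2 y
    rw [blocks21] at this
    simp only [List.sum_cons, this]
    omega
  · exact List.mem_cons_self
  · intro v hv
    simp only [List.mem_cons, List.mem_append, List.mem_replicate] at hv
    omega
  · have hs := sum_rep321 0 b2 y
    have ht := transLam_rep321 0 b2 y
    rw [blocks21] at hs ht
    rw [transLam_cons, transLam_cons, transLam_cons, ht]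
    simp only [List.sum_cons, hs]
    have hq := congrArg (fun t : ℤ => (t : ℚ)) hval
    push_cast at hq ⊢
    linear_combination (-1/2 : ℚ) * hq

lemma blocks1 (y : ℕ) :
    List.replicate 0 3 ++ (List.replicate 0 2 ++ List.replicate y 1) = List.replicate y 1 := by
  simp

lemma hook1 (n n₁ : ℕ) (m : ℤ) (a1 b1 : ℕ)
    (hn₁ : 0 < n₁)
    (hbnd : a1 + 1 ≤ n₁)
    (hsum : n₁ + a1 + b1 + 1 = n)
    (hval : 2*m = (n₁:ℤ)*((n₁:ℤ)-1) + ((a1:ℤ) - b1)*((a1:ℤ) + b1 + 1) - 2*((n:ℤ) - n₁)) :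
    ∃ L : List ℕ, IsPartitionOf n L ∧ n₁ ∈ L ∧ (∀ x ∈ L, x ≤ n₁) ∧
      transLam L = (m : ℚ) := by
  subst hsum
  refine ⟨n₁ :: (a1+1) :: List.replicate b1 1, ⟨?_, ?_, ?_⟩, ?_, ?_, ?_⟩
  · refine List.pairwise_cons.mpr ⟨?_, List.pairwise_cons.mpr ⟨?_,
      by rw [← blocks1]; exact sorted_rep321 0 0 b1⟩⟩ <;>
    · intro b hb
      simp only [List.mem_cons, List.mem_replicate] at hb
      omega
  · intro v hv
    simp only [List.mem_cons, List.mem_replicate] at hv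
    omega
  · have := sum_rep321 0 0 b1
    rw [blocks1] at this
    simp only [List.sum_cons, this]
    omega
  · exact List.mem_cons_self
  · intro v hv
    simp only [List.mem_cons, List.mem_replicate] at hv
    omega
  · have hs := sum_rep321 0 0 b1
    have ht := transLam_rep321 0 0 b1
    rw [blocks1] at hs ht
    rw [transLam_cons, transLam_cons, ht]
    simp only [List.sum_cons, hs]
    have hq := congrArg (fun t : ℤ => (t : ℚ)) hval
    push_cast at hq ⊢
    linear_combination (-1/2 : ℚ) * hq

lemma cover (r wn : ℕ) (hr : 31 ≤ r) (h1 : wn ≤ r) :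
    ∃ a1 b1 a2 b2 a3 b3 : ℕ,
      2*a1 ≤ r + 2 ∧ 2*b1 ≤ r + 2 ∧
      ((a1 + b1 + 1 = r ∧ 2*(wn:ℤ) = ((a1:ℤ) - b1) * ((a1:ℤ) + b1 + 1)) ∨
       (a2 < a1 ∧ b2 < b1 ∧ a1 + b1 + a2 + b2 + 2 = r ∧
          2*(wn:ℤ) = ((a1:ℤ) - b1)*((a1:ℤ)+b1+1) + ((a2:ℤ) - b2)*((a2:ℤ)+b2+1)) ∨
       (a2 < a1 ∧ b2 < b1 ∧ a3 < a2 ∧ b3 < b2 ∧ a1+b1+a2+b2+a3+b3+3 = r ∧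
          2*(wn:ℤ) = ((a1:ℤ) - b1)*((a1:ℤ)+b1+1) + ((a2:ℤ) - b2)*((a2:ℤ)+b2+1)
            + ((a3:ℤ) - b3)*((a3:ℤ)+b3+1))) := by
  obtain ⟨s, hs | hs⟩ : ∃ s, r = 2*s + 1 ∨ r = 2*s := ⟨r / 2, by omega⟩
  · -- ODD r = 2s+1
    subst hs
    have hs15 : 15 ≤ s := by omega
    by_cases h0 : wn = 0
    · exact ⟨s, s, 0, 0, 0, 0, by omega, by omega,
        Or.inl ⟨by omega, by push_cast; ring_nf; omega⟩⟩
    by_cases hR : wn = 2*s + 1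
    · exact ⟨s+1, s-1, 0, 0, 0, 0, by omega, by omega,
        Or.inl ⟨by omega, by
          obtain ⟨t, ht⟩ : ∃ t, s = t + 1 := ⟨s - 1, by omega⟩
          subst ht; push_cast; ring_nf; omega⟩⟩
    by_cases hq : 2*wn ≤ 2*s  -- q = 0 region, 1 ≤ wn ≤ s
    · by_cases h1' : wn = 1
      · exact ⟨s-1, s-1, 1, 0, 0, 0, by omega, by omega,
          Or.inr (Or.inl ⟨by omega, by omega, by omega, by
            obtain ⟨t, ht⟩ : ∃ t, s = t + 1 := ⟨s - 1, by omega⟩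
            subst ht; push_cast; ring_nf; omega⟩)⟩
      by_cases hmid : 2*wn ≤ s + 1
      · -- O3b / O3c
        rcases Nat.even_or_odd (s + wn) with ⟨t, ht⟩ | ⟨t, ht⟩
        · obtain ⟨u, hu⟩ : ∃ u, s + wn = 2*u + 2 := ⟨(s + wn - 2)/2, by omega⟩
          obtain ⟨g, hg⟩ : ∃ g, s = wn + 2*g + 2 := ⟨(s - wn - 2)/2, by omega⟩
          exact ⟨u+1, u, g, g+1, 0, 0, by omega, by omega,
            Or.inr (Or.inr ⟨by omega, by omega, by omega, by omega, by omega, by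
              push_cast; ring_nf; omega⟩)⟩
        · obtain ⟨u, hu⟩ : ∃ u, s + wn = 2*u + 3 := ⟨(s + wn - 3)/2, by omega⟩
          obtain ⟨g, hg⟩ : ∃ g, s = wn + 2*g + 3 := ⟨(s - wn - 3)/2, by omega⟩
          exact ⟨u+1, u, g, g+1, 1, 1, by omega, by omega,
            Or.inr (Or.inr ⟨by omega, by omega, by omega, by omega, by omega, by
              push_cast; ring_nf; omega⟩)⟩
      · -- O3d
        obtain ⟨v, hv⟩ : ∃ v, wn = v + 1 := ⟨wn - 1, by omega⟩
        obtain ⟨g, hg⟩ : ∃ g, s = wn + g := ⟨s - wn, by omega⟩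
        exact ⟨v+1, v, g, g, 0, 0, by omega, by omega,
          Or.inr (Or.inl ⟨by omega, by omega, by omega, by
            push_cast; ring_nf; omega⟩)⟩
    · -- q = 1 region : s+1 ≤ wn ≤ 2s
      by_cases ha : wn = s + 1
      · obtain ⟨g, hg⟩ : ∃ g, s = g + 7 := ⟨s - 7, by omega⟩
        exact ⟨g+1, g, 5, 3, 1, 2, by omega, by omega,
          Or.inr (Or.inr ⟨by omega, by omega, by omega, by omega, by omega, by
            push_cast; ring_nf; omega⟩)⟩
      by_cases hb : 2*wn ≤ 3*s
      · obtain ⟨v, hv⟩ : ∃ v, 2*s = wn + v := ⟨2*s - wn, by omega⟩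
        obtain ⟨g, hg⟩ : ∃ g, wn = s + g + 2 := ⟨wn - s - 2, by omega⟩
        exact ⟨v+1, v, g+2, g, 0, 0, by omega, by omega,
          Or.inr (Or.inl ⟨by omega, by omega, by omega, by
            push_cast; ring_nf; omega⟩)⟩
      by_cases hc : 2*wn ≤ 3*s + 2
      · -- middle
        rcases Nat.even_or_odd wn with ⟨t, ht⟩ | ⟨t, ht⟩
        · -- wn even: O4d, split on parity of s
          rcases Nat.even_or_odd s with ⟨t2, ht2⟩ | ⟨t2, ht2⟩
          · obtain ⟨u, hu⟩ : ∃ u, 3*s = wn + 2*u + 2 := ⟨(3*s - wn - 2)/2, by omega⟩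
            obtain ⟨g, hg⟩ : ∃ g, wn = s + 2*g + 4 := ⟨(wn - s - 4)/2, by omega⟩
            exact ⟨u+1, u, g+3, g, 0, 0, by omega, by omega,
              Or.inr (Or.inr ⟨by omega, by omega, by omega, by omega, by omega, by
                push_cast; ring_nf; omega⟩)⟩
          · obtain ⟨u, hu⟩ : ∃ u, 3*s = wn + 2*u + 5 := ⟨(3*s - wn - 5)/2, by omega⟩
            obtain ⟨g, hg⟩ : ∃ g, wn = s + 2*g + 3 := ⟨(wn - s - 3)/2, by omega⟩
            exact ⟨u+1, u, g+3, g, 1, 1, by omega, by omega,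
              Or.inr (Or.inr ⟨by omega, by omega, by omega, by omega, by omega, by
                push_cast; ring_nf; omega⟩)⟩
        · -- wn odd: O4c
          obtain ⟨u, hu⟩ : ∃ u, wn = 2*u + 3 := ⟨(wn - 3)/2, by omega⟩
          obtain ⟨g, hg⟩ : ∃ g, s = u + g + 2 := ⟨s - u - 2, by omega⟩
          exact ⟨u+2, u, g, g, 0, 0, by omega, by omega,
            Or.inr (Or.inr ⟨by omega, by omega, by omega, by omega, by omega, by
              push_cast; ring_nf; omega⟩)⟩
      · -- O4e
        obtain ⟨v, hv⟩ : ∃ v, 2*s = wn + v := ⟨2*s - wn, by omega⟩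
        obtain ⟨g, hg⟩ : ∃ g, wn = s + g + 2 := ⟨wn - s - 2, by omega⟩
        exact ⟨g+2, g, v+1, v, 0, 0, by omega, by omega,
          Or.inr (Or.inl ⟨by omega, by omega, by omega, by
            push_cast; ring_nf; omega⟩)⟩
  · -- EVEN r = 2s
    subst hs
    have hs16 : 16 ≤ s := by omega
    by_cases h0 : wn = 0
    · exact ⟨s-1, s-1, 0, 0, 0, 0, by omega, by omega,
        Or.inr (Or.inl ⟨by omega, by omega, by omega, by
          obtain ⟨t, ht⟩ : ∃ t, s = t + 1 := ⟨s - 1, by omega⟩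
          subst ht; push_cast; ring_nf; omega⟩)⟩
    by_cases h1' : wn = 1
    · -- E2: (s-4, s-4, 2, 2, 1, 0)
      obtain ⟨t, ht⟩ : ∃ t, s = t + 4 := ⟨s - 4, by omega⟩
      exact ⟨t, t, 2, 2, 1, 0, by omega, by omega,
        Or.inr (Or.inr ⟨by omega, by omega, by omega, by omega, by omega, by
          push_cast; ring_nf; omega⟩)⟩
    by_cases hR : wn = 2*s
    · -- E3: (s-1, s-3, 2, 0)
      obtain ⟨t, ht⟩ : ∃ t, s = t + 3 := ⟨s - 3, by omega⟩
      exact ⟨t+2, t, 2, 0, 0, 0, by omega, by omega,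
        Or.inr (Or.inl ⟨by omega, by omega, by omega, by
          push_cast; ring_nf; omega⟩)⟩
    by_cases hE4 : wn = s
    · exact ⟨s, s-1, 0, 0, 0, 0, by omega, by omega,
        Or.inl ⟨by omega, by
          obtain ⟨t, ht⟩ : ∃ t, s = t + 1 := ⟨s - 1, by omega⟩
          subst ht; push_cast; ring_nf; omega⟩⟩
    by_cases hE5 : 2*wn + 2 ≤ s
    · -- E5: (c, c, v+1, v, 0, 0), c = s - wn - 1
      obtain ⟨c, hc⟩ : ∃ c, s = wn + c + 1 := ⟨s - wn - 1, by omega⟩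
      obtain ⟨v, hv⟩ : ∃ v, wn = v + 1 := ⟨wn - 1, by omega⟩
      exact ⟨c, c, v+1, v, 0, 0, by omega, by omega,
        Or.inr (Or.inr ⟨by omega, by omega, by omega, by omega, by omega, by
          push_cast; ring_nf; omega⟩)⟩
    by_cases hq : wn ≤ s - 1  -- q=0 side remaining: wn ≤ s-1
    · by_cases hmidl : wn = s - 1
      · by_cases h32 : s = 16
        · -- r = 32, wn = 15 special
          refine ⟨12, 10, 2, 4, 0, 1, by omega, by omega,
            Or.inr (Or.inr ⟨by omega, by omega, by omega, by omega, by omega, by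
              subst h32; rw [show wn = 15 by omega]; decide⟩)⟩
        · -- E8: (s-9, s-10, 7, 5, 1, 3)
          obtain ⟨t, ht⟩ : ∃ t, s = t + 10 := ⟨s - 10, by omega⟩
          exact ⟨t+1, t, 7, 5, 1, 3, by omega, by omega,
            Or.inr (Or.inr ⟨by omega, by omega, by omega, by omega, by omega, by
              push_cast; ring_nf; omega⟩)⟩
      · rcases Nat.even_or_odd wn with ⟨t, ht⟩ | ⟨t, ht⟩
        · -- E6even: (g, g, u+3, u+1, 1, 0), wn = 2u+6, g = s-u-4
          obtain ⟨u, hu⟩ : ∃ u, wn = 2*u + 6 := ⟨(wn - 6)/2, by omega⟩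
          obtain ⟨g, hg⟩ : ∃ g, s = u + g + 4 := ⟨s - u - 4, by omega⟩
          exact ⟨g, g, u+3, u+1, 1, 0, by omega, by omega,
            Or.inr (Or.inr ⟨by omega, by omega, by omega, by omega, by omega, by
              push_cast; ring_nf; omega⟩)⟩
        · -- E6odd: (g, g, u+2, u), wn = 2u+3, 2g+1 = 2s - wn
          obtain ⟨u, hu⟩ : ∃ u, wn = 2*u + 3 := ⟨(wn - 3)/2, by omega⟩
          obtain ⟨g, hg⟩ : ∃ g, 2*s = wn + 2*g + 1 := ⟨(2*s - wn - 1)/2, by omega⟩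
          exact ⟨g, g, u+2, u, 0, 0, by omega, by omega,
            Or.inr (Or.inl ⟨by omega, by omega, by omega, by
              push_cast; ring_nf; omega⟩)⟩
    · -- q=1 side: s+1 ≤ wn ≤ 2s-1
      by_cases hE9 : wn = s + 1
      · obtain ⟨t, ht⟩ : ∃ t, s = t + 8 := ⟨s - 8, by omega⟩
        exact ⟨t+1, t, 6, 4, 0, 2, by omega, by omega,
          Or.inr (Or.inr ⟨by omega, by omega, by omega, by omega, by omega, by
            push_cast; ring_nf; omega⟩)⟩
      by_cases hE12 : wn = 2*s - 2
      · obtain ⟨t, ht⟩ : ∃ t, s = t + 7 := ⟨s - 7, by omega⟩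
        exact ⟨t+2, t, 4, 2, 2, 1, by omega, by omega,
          Or.inr (Or.inr ⟨by omega, by omega, by omega, by omega, by omega, by
            push_cast; ring_nf; omega⟩)⟩
      by_cases hE13 : wn = 2*s - 4
      · obtain ⟨t, ht⟩ : ∃ t, s = t + 11 := ⟨s - 11, by omega⟩
        exact ⟨t+2, t, 6, 4, 4, 3, by omega, by omega,
          Or.inr (Or.inr ⟨by omega, by omega, by omega, by omega, by omega, by
            push_cast; ring_nf; omega⟩)⟩
      · rcases Nat.even_or_odd wn with ⟨t, ht⟩ | ⟨t, ht⟩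
        · -- E11: (u+2, u, g, g, 1, 0), wn = 2u+4, 2s = wn + 2g + 2
          obtain ⟨u, hu⟩ : ∃ u, wn = 2*u + 4 := ⟨(wn - 4)/2, by omega⟩
          obtain ⟨g, hg⟩ : ∃ g, 2*s = wn + 2*g + 2 := ⟨(2*s - wn - 2)/2, by omega⟩
          exact ⟨u+2, u, g, g, 1, 0, by omega, by omega,
            Or.inr (Or.inr ⟨by omega, by omega, by omega, by omega, by omega, by
              push_cast; ring_nf; omega⟩)⟩
        · -- E10: (u+2, u, g, g), wn = 2u+3, 2s = wn + 2g + 1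
          obtain ⟨u, hu⟩ : ∃ u, wn = 2*u + 3 := ⟨(wn - 3)/2, by omega⟩
          obtain ⟨g, hg⟩ : ∃ g, 2*s = wn + 2*g + 1 := ⟨(2*s - wn - 1)/2, by omega⟩
          exact ⟨u+2, u, g, g, 0, 0, by omega, by omega,
            Or.inr (Or.inl ⟨by omega, by omega, by omega, by
              push_cast; ring_nf; omega⟩)⟩



theorem segment_near_choose_n1 (n n₁ : ℕ) (hn₁ : 0 < n₁) (h31 : n₁ + 31 ≤ n)
    (h3 : n + 3 ≤ 3 * n₁) (m : ℤ)
    (hm1 : (n₁.choose 2 : ℤ) - 2 * ((n : ℤ) - (n₁ : ℤ)) ≤ m)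
    (hm2 : m ≤ (n₁.choose 2 : ℤ)) :
    ∃ L : List ℕ, IsPartitionOf n L ∧ n₁ ∈ L ∧ (∀ x ∈ L, x ≤ n₁) ∧
      transLam L = (m : ℚ) := by
  set r : ℕ := n - n₁ with hrdef
  have hnr : n = n₁ + r := by omega
  have hr31 : 31 ≤ r := by omega
  have hB : r + 3 ≤ 2 * n₁ := by omega
  have hnz : ((n : ℤ) - n₁) = (r : ℤ) := by push_cast [hnr]; ring
  have h2C : 2 * (n₁.choose 2 : ℤ) = (n₁ : ℤ) * ((n₁:ℤ) - 1) := by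
    obtain ⟨k, hk⟩ : ∃ k, n₁ = k + 1 := ⟨n₁ - 1, by omega⟩
    subst hk
    obtain ⟨t, ht⟩ := Nat.even_mul_succ_self k
    have h2 : 2 * ((k+1).choose 2) = (k+1) * k := by
      rw [Nat.choose_two_right, Nat.add_sub_cancel]
      have hmc : (k+1) * k = k * (k+1) := Nat.mul_comm _ _
      omega
    have := congrArg (fun x : ℕ => (x : ℤ)) h2
    push_cast at this ⊢
    linear_combination this
  set wZ : ℤ := (r : ℤ) - ((n₁.choose 2 : ℤ) - m) with hwZ
  have hw2 : 2*m = (n₁:ℤ)*((n₁:ℤ) - 1) - 2*(r:ℤ) + 2*wZ := by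
    rw [hwZ]; linarith [h2C]
  have hwub : wZ ≤ (r:ℤ) := by rw [hwZ]; linarith
  have hwlb : -(r:ℤ) ≤ wZ := by rw [hwZ]; linarith [hm1, hnz]; 
  rcases le_or_gt 0 wZ with hpos | hneg
  · obtain ⟨wn, hwn⟩ : ∃ wn : ℕ, (wn : ℤ) = wZ := ⟨wZ.toNat, Int.toNat_of_nonneg hpos⟩
    have hw1 : wn ≤ r := by exact_mod_cast hwn ▸ hwub
    obtain ⟨a1, b1, a2, b2, a3, b3, hba, hbb, hd⟩ := cover r wn hr31 hw1
    rcases hd with ⟨hsz, hct⟩ | ⟨h12a, h12b, hsz, hct⟩ | ⟨h12a, h12b, h23a, h23b, hsz, hct⟩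
    · exact hook1 n n₁ m a1 b1 hn₁ (by omega) (by omega)
        (by rw [hnz]; push_cast; linear_combination hw2 + hct - 2*hwn)
    · exact hook2 n n₁ m a1 b1 a2 b2 hn₁ h12a h12b (by omega) (by omega)
        (by rw [hnz]; push_cast; linear_combination hw2 + hct - 2*hwn)
    · exact hook3 n n₁ m a1 b1 a2 b2 a3 b3 hn₁ h12a h23a h12b h23b (by omega) (by omega)
        (by rw [hnz]; push_cast; linear_combination hw2 + hct - 2*hwn)
  · obtain ⟨wn, hwn⟩ : ∃ wn : ℕ, (wn : ℤ) = -wZ := ⟨(-wZ).toNat, Int.toNat_of_nonneg (by omega)⟩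
    have hw1 : wn ≤ r := by
      have : (wn:ℤ) ≤ (r:ℤ) := by omega
      exact_mod_cast this
    obtain ⟨a1, b1, a2, b2, a3, b3, hba, hbb, hd⟩ := cover r wn hr31 hw1
    rcases hd with ⟨hsz, hct⟩ | ⟨h12a, h12b, hsz, hct⟩ | ⟨h12a, h12b, h23a, h23b, hsz, hct⟩
    · exact hook1 n n₁ m b1 a1 hn₁ (by omega) (by omega)
        (by rw [hnz]; push_cast; linear_combination hw2 - hct + 2*hwn)
    · exact hook2 n n₁ m b1 a1 b2 a2 hn₁ h12b h12a (by omega) (by omega)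
        (by rw [hnz]; push_cast; linear_combination hw2 - hct + 2*hwn)
    · exact hook3 n n₁ m b1 a1 b2 a2 b3 a3 hn₁ h12b h23b h12a h23a (by omega) (by omega)
        (by rw [hnz]; push_cast; linear_combination hw2 - hct + 2*hwn)
end
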